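/- Triple quad formula (red): for points A1, A2, A3 in the plane over a field of characteristic not 2, if the three points are collinear then (Q1+Q2+Q3)² = 2(Q1²+Q2²+Q3²), where Qi are the red quadrances Q1 = Q_r(A2,A3), Q2 = Q_r(A1,A3), Q3 = Q_r(A1,A2). -/

import Mathlib

/-- Red quadrance between two points. -/
def Qr {F : Type*} [Field F] (X Y : F × F) : F :=
  (Y.1 - X.1) ^ 2 - (Y.2 - X.2) ^ 2

/-- Three points are collinear when the vectors `A2 - A1` and `A3 - A1`
are linearly dependent. -/
def Collinear3 {F : Type*} [Field F] (A1 A2 A3 : F × F) : Prop :=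
  ∃ s t : F, (s, t) ≠ (0, 0) ∧
    s • (A2.1 - A1.1, A2.2 - A1.2) + t • (A3.1 - A1.1, A3.2 - A1.2) = (0, 0)

/-- Triple quad formula (red): collinearity implies
`(Q1+Q2+Q3)² = 2(Q1²+Q2²+Q3²)` for red quadrances. -/
theorem red_triple_quad {F : Type*} [Field F] (hchar : (2 : F) ≠ 0)
    (A1 A2 A3 : F × F) (h : Collinear3 A1 A2 A3) :
    (Qr A2 A3 + Qr A1 A3 + Qr A1 A2) ^ 2
      = 2 * ((Qr A2 A3) ^ 2 + (Qr A1 A3) ^ 2 + (Qr A1 A2) ^ 2) := by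
  obtain ⟨s, t, hst, heq⟩ := h
  have h1 : s * (A2.1 - A1.1) + t * (A3.1 - A1.1) = 0 := congrArg Prod.fst heq
  have h2 : s * (A2.2 - A1.2) + t * (A3.2 - A1.2) = 0 := congrArg Prod.snd heq
  have hcross : (A2.1 - A1.1) * (A3.2 - A1.2) - (A3.1 - A1.1) * (A2.2 - A1.2) = 0 := by
    rcases eq_or_ne s 0 with hs | hs
    · rcases eq_or_ne t 0 with ht | ht
      · exact absurd (by simp [hs, ht]) hst
      · have h1' : A3.1 - A1.1 = 0 := by
          rw [hs, zero_mul, zero_add] at h1; simpa using mul_eq_zero.mp h1 |>.resolve_left ht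
        have h2' : A3.2 - A1.2 = 0 := by
          rw [hs, zero_mul, zero_add] at h2; simpa using mul_eq_zero.mp h2 |>.resolve_left ht
        rw [h1', h2']; ring
    · have e1 : A2.1 - A1.1 = -(t/s) * (A3.1 - A1.1) := by field_simp; linear_combination h1
      have e2 : A2.2 - A1.2 = -(t/s) * (A3.2 - A1.2) := by field_simp; linear_combination h2
      rw [e1, e2]; ring
  simp only [Qr]
  linear_combination (-4 * ((A2.1 - A1.1) * (A3.2 - A1.2) - (A3.1 - A1.1) * (A2.2 - A1.2))) * hcross
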